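/- Let H and K be real inner product spaces, D : H → K a linear map, X_R ⊆ H a subspace, and σ ≥ 0 a constant such that ‖Dφ‖ ≤ σ^{1/2}‖φ‖ for all φ ∈ X_R. Let b : H × H × H → ℝ be a trilinear map satisfying b(w, v, v) = 0 for all w, v, and |b(w, u, v)| ≤ C_b ‖Dw‖ ‖Du‖ ‖v‖^{1/2} ‖Dv‖^{1/2} for all w, u, v ∈ X_R, for some constant C_b > 0. Let ν > 0, Δt > 0, J ≥ 1, N ≥ 1, and for each j = 1,…,J let u^{j,0}, u^{j,1}, …, u^{j,N} ∈ X_R and let F^{j,n} : H → ℝ (n = 2,…,N) be linear functionals with |F^{j,n}(v)| ≤ γ_{j,n} ‖Dv‖ for all v ∈ X_R. For n ≥ 1 define the ensemble mean ⟨u⟩^n := (1/J) Σ_{j=1}^J (2u^{j,n} − u^{j,n−1}) and the fluctuations u'^{j,n} := 2u^{j,n} − u^{j,n−1} − ⟨u⟩^n. Suppose that for n = 1,…,N−1 and all j, and all φ ∈ X_R, ⟨(3u^{j,n+1} − 4u^{j,n} + u^{j,n−1})/(2Δt), φ⟩ + b(⟨u⟩^n, u^{j,n+1}, φ) + b(u'^{j,n},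 2u^{j,n} − u^{j,n−1}, φ) + ν⟨Du^{j,n+1}, Dφ⟩ = F^{j,n+1}(φ), and that the time-step condition 2 C_b² σ^{1/2} (Δt/ν) ‖Du'^{j,n}‖² ≤ 1 holds for all j = 1,…,J and all n = 1,…,N−1. Then for every j and every 1 ≤ n ≤ N, (1/4)‖u^{j,n}‖² + (1/4)‖2u^{j,n} − u^{j,n−1}‖² + (νΔt/4) Σ_{n'=1}^{n−1} ‖Du^{j,n'+1}‖² ≤ (Δt/ν) Σ_{n'=1}^{n−1} γ_{j,n'+1}² + (1/4)‖u^{j,1}‖² + (1/4)‖2u^{j,1} − u^{j,0}‖². -/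

import Mathlib

open RealInnerProductSpace

lemma g_id_aux {H : Type*} [NormedAddCommGroup H] [InnerProductSpace ℝ H] (a b c : H) :
    ⟪(3:ℝ) • a - (4:ℝ) • b + c, a⟫ =
      (1/2)*(‖a‖^2 + ‖(2:ℝ) • a - b‖^2) - (1/2)*(‖b‖^2 + ‖(2:ℝ) • b - c‖^2)
        + (1/2)*‖a - (2:ℝ) • b + c‖^2 := by
  simp only [← real_inner_self_eq_norm_sq]
  simp only [inner_sub_left, inner_sub_right, inner_add_left, inner_add_right,
    real_inner_smul_left, real_inner_smul_right]
  rw [real_inner_comm b a, real_inner_comm c a, real_inner_comm c b]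
  ring

set_option maxHeartbeats 1600000

/-- Abstract form of the long-time stability theorem (Theorem 4.1 of the paper) for the
second-order ensemble-POD scheme EnB-POD: under the POD inverse inequality
`‖Dφ‖ ≤ σ^{1/2}‖φ‖` on `X_R`, skew-symmetry and the bound
`|b(w,u,v)| ≤ C_b ‖Dw‖‖Du‖‖v‖^{1/2}‖Dv‖^{1/2}` for the trilinear form, and the time-step
condition `2C_b²σ^{1/2}(Δt/ν)‖Du'^{j,n}‖² ≤ 1`, every solution of the scheme satisfies the
discrete energy bound. -/
theorem enB_pod_stability
    {H K : Type*} [NormedAddCommGroup H] [InnerProductSpace ℝ H]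
    [NormedAddCommGroup K] [InnerProductSpace ℝ K]
    (D : H →ₗ[ℝ] K) (XR : Submodule ℝ H)
    (σ : ℝ) (hσ : 0 ≤ σ)
    (hinv : ∀ φ ∈ XR, ‖D φ‖ ≤ Real.sqrt σ * ‖φ‖)
    (b : H →ₗ[ℝ] H →ₗ[ℝ] H →ₗ[ℝ] ℝ)
    (hbskew : ∀ w v : H, b w v v = 0)
    (Cb : ℝ) (hCb : 0 < Cb)
    (hb : ∀ w u v : H, w ∈ XR → u ∈ XR → v ∈ XR →
      |b w u v| ≤ Cb * ‖D w‖ * ‖D u‖ * Real.sqrt ‖v‖ * Real.sqrt ‖D v‖)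
    (ν Δt : ℝ) (hν : 0 < ν) (hΔt : 0 < Δt)
    (J N : ℕ) (hJ : 1 ≤ J) (hN : 1 ≤ N)
    (u : Fin J → ℕ → H) (hu : ∀ (j : Fin J) (n : ℕ), n ≤ N → u j n ∈ XR)
    (F : Fin J → ℕ → H →ₗ[ℝ] ℝ) (γ : Fin J → ℕ → ℝ)
    (hF : ∀ (j : Fin J) (n : ℕ), 2 ≤ n → n ≤ N →
      ∀ v ∈ XR, |F j n v| ≤ γ j n * ‖D v‖)
    (um : ℕ → H)
    (hum : ∀ n : ℕ, 1 ≤ n →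
      um n = (J : ℝ)⁻¹ • ∑ j : Fin J, ((2 : ℝ) • u j n - u j (n - 1)))
    (u' : Fin J → ℕ → H)
    (hu' : ∀ (j : Fin J) (n : ℕ), 1 ≤ n →
      u' j n = (2 : ℝ) • u j n - u j (n - 1) - um n)
    (hscheme : ∀ (j : Fin J) (n : ℕ), 1 ≤ n → n + 1 ≤ N → ∀ φ ∈ XR,
      ⟪(2 * Δt)⁻¹ • ((3 : ℝ) • u j (n + 1) - (4 : ℝ) • u j n + u j (n - 1)), φ⟫
        + b (um n) (u j (n + 1)) φ
        + b (u' j n) ((2 : ℝ) • u j n - u j (n - 1)) φ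
        + ν * ⟪D (u j (n + 1)), D φ⟫ = F j (n + 1) φ)
    (hstep : ∀ (j : Fin J) (n : ℕ), 1 ≤ n → n + 1 ≤ N →
      2 * Cb ^ 2 * Real.sqrt σ * (Δt / ν) * ‖D (u' j n)‖ ^ 2 ≤ 1) :
    ∀ (j : Fin J) (n : ℕ), 1 ≤ n → n ≤ N →
      (1 / 4) * ‖u j n‖ ^ 2 + (1 / 4) * ‖(2 : ℝ) • u j n - u j (n - 1)‖ ^ 2
          + (ν * Δt / 4) * ∑ n' ∈ Finset.Icc 1 (n - 1), ‖D (u j (n' + 1))‖ ^ 2 ≤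
        (Δt / ν) * ∑ n' ∈ Finset.Icc 1 (n - 1), (γ j (n' + 1)) ^ 2
          + (1 / 4) * ‖u j 1‖ ^ 2 + (1 / 4) * ‖(2 : ℝ) • u j 1 - u j 0‖ ^ 2 := by
  -- skew symmetry in the last two arguments
  have hskew2 : ∀ w x y : H, b w x y = - b w y x := by
    intro w x y
    have h := hbskew w (x + y)
    have hx := hbskew w x
    have hy := hbskew w y
    simp only [map_add, LinearMap.add_apply] at h
    rw [hx, hy] at h
    linarith
  -- key one-step energy inequality
  have key : ∀ (j : Fin J) (n : ℕ), 1 ≤ n → n + 1 ≤ N →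
      (1/4) * ‖u j (n+1)‖^2 + (1/4) * ‖(2:ℝ) • u j (n+1) - u j n‖^2
        + (ν * Δt / 4) * ‖D (u j (n+1))‖^2 ≤
      (1/4) * ‖u j n‖^2 + (1/4) * ‖(2:ℝ) • u j n - u j (n-1)‖^2
        + (Δt / ν) * (γ j (n+1))^2 := by
    intro j n hn1 hnN
    have hnle : n ≤ N := le_trans (Nat.le_succ n) hnN
    have hn1le : n - 1 ≤ N := le_trans (Nat.sub_le n 1) hnle
    have haX : u j (n+1) ∈ XR := hu j (n+1) hnN
    have hnX : u j n ∈ XR := hu j n hnle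
    have hn1X : u j (n-1) ∈ XR := hu j (n-1) hn1le
    have hs := hscheme j n hn1 hnN (u j (n+1)) haX
    rw [real_inner_smul_left, g_id_aux (u j (n+1)) (u j n) (u j (n-1)),
      real_inner_self_eq_norm_sq] at hs
    set a := u j (n+1) with ha
    set δ := a - (2:ℝ) • u j n + u j (n-1) with hδ
    set m := (2:ℝ) • u j n - u j (n-1) with hm
    set w := u' j n with hw
    have hmX : m ∈ XR := XR.sub_mem (XR.smul_mem _ hnX) hn1X
    have hδX : δ ∈ XR := XR.add_mem (XR.sub_mem haX (XR.smul_mem _ hnX)) hn1X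
    have humX : um n ∈ XR := by
      rw [hum n hn1]
      exact XR.smul_mem _ (Submodule.sum_mem _ (fun i _ =>
        XR.sub_mem (XR.smul_mem _ (hu i n hnle)) (hu i (n-1) hn1le)))
    have hwX : w ∈ XR := by
      rw [hw, hu' j n hn1]
      exact XR.sub_mem hmX humX
    have hbmean : b (um n) a a = 0 := hbskew _ _
    rw [hbmean] at hs
    have hmδ : m = a - δ := by rw [hδ, hm]; abel
    -- nonlinear term bound
    have hT : |b w m a| ≤ Cb * Real.sqrt (Real.sqrt σ) * ‖D w‖ * ‖D a‖ * ‖δ‖ := by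
      have h1 : b w m a = b w a δ := by
        have h2 : b w m a = b w a a - b w δ a := by
          rw [hmδ]; simp [map_sub, LinearMap.sub_apply]
        rw [h2, hbskew, hskew2 w δ a]; ring
      rw [h1]
      calc |b w a δ| ≤ Cb * ‖D w‖ * ‖D a‖ * Real.sqrt ‖δ‖ * Real.sqrt ‖D δ‖ :=
            hb w a δ hwX haX hδX
        _ ≤ Cb * ‖D w‖ * ‖D a‖ * Real.sqrt ‖δ‖ * (Real.sqrt (Real.sqrt σ) * Real.sqrt ‖δ‖) := by
            apply mul_le_mul_of_nonneg_left
            · rw [← Real.sqrt_mul (Real.sqrt_nonneg σ)]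
              exact Real.sqrt_le_sqrt (hinv δ hδX)
            · positivity
        _ = Cb * ‖D w‖ * ‖D a‖ * Real.sqrt (Real.sqrt σ) * (Real.sqrt ‖δ‖ * Real.sqrt ‖δ‖) := by
            ring
        _ = Cb * Real.sqrt (Real.sqrt σ) * ‖D w‖ * ‖D a‖ * ‖δ‖ := by
            rw [Real.mul_self_sqrt (norm_nonneg δ)]; ring
    -- Young on nonlinear term
    have hT2 : |b w m a| ≤ Δt * Cb^2 * Real.sqrt σ * ‖D w‖^2 * ‖D a‖^2
        + (1/(4*Δt)) * ‖δ‖^2 := by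
      have hY : Cb * Real.sqrt (Real.sqrt σ) * ‖D w‖ * ‖D a‖ * ‖δ‖ ≤
          Δt * (Cb * Real.sqrt (Real.sqrt σ) * ‖D w‖ * ‖D a‖)^2 + (1/(4*Δt)) * ‖δ‖^2 := by
        set X := Cb * Real.sqrt (Real.sqrt σ) * ‖D w‖ * ‖D a‖
        set Y := ‖δ‖
        have hid : Δt * X^2 + (1/(4*Δt)) * Y^2 - X * Y = (2*Δt*X - Y)^2 / (4*Δt) := by
          field_simp; ring
        have hnn : (0:ℝ) ≤ (2*Δt*X - Y)^2 / (4*Δt) :=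
          div_nonneg (sq_nonneg _) (by linarith)
        linarith
      have hsq : (Cb * Real.sqrt (Real.sqrt σ) * ‖D w‖ * ‖D a‖)^2 =
          Cb^2 * Real.sqrt σ * ‖D w‖^2 * ‖D a‖^2 := by
        rw [show (Cb * Real.sqrt (Real.sqrt σ) * ‖D w‖ * ‖D a‖)^2
            = Cb^2 * (Real.sqrt (Real.sqrt σ))^2 * ‖D w‖^2 * ‖D a‖^2 from by ring,
          Real.sq_sqrt (Real.sqrt_nonneg σ)]
      calc |b w m a| ≤ Cb * Real.sqrt (Real.sqrt σ) * ‖D w‖ * ‖D a‖ * ‖δ‖ := hT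
        _ ≤ Δt * (Cb * Real.sqrt (Real.sqrt σ) * ‖D w‖ * ‖D a‖)^2 + (1/(4*Δt)) * ‖δ‖^2 := hY
        _ = Δt * Cb^2 * Real.sqrt σ * ‖D w‖^2 * ‖D a‖^2 + (1/(4*Δt)) * ‖δ‖^2 := by
            rw [hsq]; ring
    -- step condition
    have hstepc : Δt * Cb^2 * Real.sqrt σ * ‖D w‖^2 ≤ ν / 2 := by
      have h := hstep j n hn1 hnN
      rw [← hw] at h
      have hmul := mul_le_mul_of_nonneg_left h (by positivity : (0:ℝ) ≤ ν/2)
      have heq : (ν/2) * (2 * Cb ^ 2 * Real.sqrt σ * (Δt / ν) * ‖D w‖ ^ 2)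
          = Δt * Cb^2 * Real.sqrt σ * ‖D w‖^2 := by
        field_simp
      rw [heq] at hmul
      linarith
    have habs : Δt * Cb^2 * Real.sqrt σ * ‖D w‖^2 * ‖D a‖^2 ≤ (ν/2) * ‖D a‖^2 :=
      by nlinarith [mul_le_mul_of_nonneg_right hstepc (sq_nonneg ‖D a‖)]
    -- force bound
    have hFa : F j (n+1) a ≤ (1/ν) * (γ j (n+1))^2 + (ν/4) * ‖D a‖^2 := by
      have h1 : F j (n+1) a ≤ γ j (n+1) * ‖D a‖ :=
        le_trans (le_abs_self _) (hF j (n+1) (by omega) hnN a haX)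
      have h3 : (1/ν) * (γ j (n+1))^2 + (ν/4) * ‖D a‖^2 - γ j (n+1) * ‖D a‖
          = (2 * γ j (n+1) - ν * ‖D a‖)^2 / (4*ν) := by
        field_simp; ring
      have hnn : (0:ℝ) ≤ (2 * γ j (n+1) - ν * ‖D a‖)^2 / (4*ν) :=
        div_nonneg (sq_nonneg _) (by linarith)
      linarith
    -- assemble
    have hTlow : -(Δt * Cb^2 * Real.sqrt σ * ‖D w‖^2 * ‖D a‖^2 + (1/(4*Δt)) * ‖δ‖^2)
        ≤ b w m a := by
      have := neg_abs_le (b w m a); linarith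
    have hGval : (1/2)*(‖a‖^2 + ‖(2:ℝ) • a - u j n‖^2)
        - (1/2)*(‖u j n‖^2 + ‖m‖^2) + (1/2)*‖δ‖^2
        = 2*Δt * (F j (n+1) a - b w m a - ν * ‖D a‖^2) := by
      have h2Δt : (2*Δt) ≠ 0 := by positivity
      have hinvEq : (2*Δt)⁻¹ * ((1/2)*(‖a‖^2 + ‖(2:ℝ) • a - u j n‖^2)
          - (1/2)*(‖u j n‖^2 + ‖m‖^2) + (1/2)*‖δ‖^2)
          = F j (n+1) a - b w m a - ν * ‖D a‖^2 := by linarith [hs]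
      calc (1/2)*(‖a‖^2 + ‖(2:ℝ) • a - u j n‖^2)
            - (1/2)*(‖u j n‖^2 + ‖m‖^2) + (1/2)*‖δ‖^2
          = (2*Δt) * ((2*Δt)⁻¹ * ((1/2)*(‖a‖^2 + ‖(2:ℝ) • a - u j n‖^2)
            - (1/2)*(‖u j n‖^2 + ‖m‖^2) + (1/2)*‖δ‖^2)) := by
            rw [← mul_assoc, mul_inv_cancel₀ h2Δt, one_mul]
        _ = 2*Δt * (F j (n+1) a - b w m a - ν * ‖D a‖^2) := by rw [hinvEq]
    have hq : F j (n+1) a - b w m a - ν * ‖D a‖^2 ≤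
        (1/ν) * (γ j (n+1))^2 - (ν/4) * ‖D a‖^2 + (1/(4*Δt)) * ‖δ‖^2 := by
      linarith
    have hmul2 : 2*Δt * (F j (n+1) a - b w m a - ν * ‖D a‖^2) ≤
        2*Δt * ((1/ν) * (γ j (n+1))^2 - (ν/4) * ‖D a‖^2 + (1/(4*Δt)) * ‖δ‖^2) :=
      mul_le_mul_of_nonneg_left hq (by positivity)
    have hdist : 2*Δt * ((1/ν) * (γ j (n+1))^2 - (ν/4) * ‖D a‖^2 + (1/(4*Δt)) * ‖δ‖^2)
        = 2*(Δt/ν)*(γ j (n+1))^2 - (ν*Δt/2) * ‖D a‖^2 + (1/2) * ‖δ‖^2 := by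
      field_simp; ring
    rw [hdist] at hmul2
    linarith [hGval, hmul2]
  -- induction on n
  intro j n hn1 hnN
  induction n, hn1 using Nat.le_induction with
  | base =>
    rw [show (1:ℕ) - 1 = 0 from rfl, Finset.Icc_eq_empty (by norm_num)]
    simp only [Finset.sum_empty, mul_zero, zero_add]
    linarith
  | succ n hn ih =>
    have hnN' : n ≤ N := by omega
    have ihh := ih hnN'
    have kh := key j n hn (by omega)
    have hrw : (n + 1) - 1 = n := by omega
    rw [hrw]
    have e : Finset.Icc 1 n = Finset.Icc 1 ((n-1)+1) := by congr 1; omega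
    have e2 : n - 1 + 1 = n := by omega
    rw [e, Finset.sum_Icc_succ_top (by omega), Finset.sum_Icc_succ_top (by omega), e2,
      mul_add, mul_add]
    linarith
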